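/- Let m ≥ 1, let n = 2m+1, and let A be the n×n integer matrix with A_{ii} = 3 for all i, A_{ij} = 1 whenever i − j ≡ ±1 (mod n) with i ≠ j, and A_{ij} = 0 otherwise. Then the abelian group ℤⁿ/(image of A as a ℤ-linear map) is isomorphic to ℤ/(fib(2m+1))ℤ × ℤ/(5·fib(2m+1))ℤ, where fib denotes the Fibonacci sequence (fib 0 = 0, fib 1 = 1). -/
import Mathlib

open Matrix

namespace Stmt9Aux

def Bapp (z : ℤ × ℤ) : ℤ × ℤ := (-z.2, z.1 - 3*z.2)

def cseq : ℕ → ℤ × ℤ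
  | 0 => (1, 0)
  | k+1 => Bapp (cseq k)

lemma cseq_zero : cseq 0 = (1, 0) := rfl
lemma cseq_one : cseq 1 = (0, 1) := by simp [cseq, Bapp]

lemma cseq_rec (k : ℕ) : cseq (k+2) = -cseq k - (3:ℤ) • cseq (k+1) := by
  show Bapp (Bapp (cseq k)) = -cseq k - (3:ℤ) • Bapp (cseq k)
  obtain ⟨x, y⟩ := cseq k
  apply Prod.ext <;> simp [Bapp] <;> ring

lemma fibZ (t : ℕ) : (Nat.fib (t+2) : ℤ) = Nat.fib t + Nat.fib (t+1) := by
  push_cast [Nat.fib_add_two]; ring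

lemma fib4 (t : ℕ) : (Nat.fib (t+4) : ℤ) = 3 * Nat.fib (t+2) - Nat.fib t := by
  have h1 := fibZ t
  have h2 := fibZ (t+1)
  have h3 := fibZ (t+2)
  rw [show t+1+2 = t+3 from by ring] at h2
  rw [show t+2+2 = t+4 from by ring, show t+2+1 = t+3 from by ring] at h3
  linarith

lemma cseq_formula (k : ℕ) :
    cseq (2*k+1) = ((Nat.fib (4*k) : ℤ), (Nat.fib (4*k+2) : ℤ)) ∧
    cseq (2*k+2) = (-(Nat.fib (4*k+2) : ℤ), -(Nat.fib (4*k+4) : ℤ)) := by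
  induction k with
  | zero =>
    have h2 : Nat.fib 2 = 1 := by decide
    have h4 : Nat.fib 4 = 3 := by decide
    constructor
    · show Bapp (cseq 0) = _
      simp [cseq, Bapp, h2]
    · show Bapp (Bapp (cseq 0)) = _
      simp [cseq, Bapp, h2, h4]
  | succ k ih =>
    obtain ⟨ih1, ih2⟩ := ih
    have h6 : (Nat.fib (4*k+6) : ℤ) = 3 * Nat.fib (4*k+4) - Nat.fib (4*k+2) := by
      have := fib4 (4*k+2)
      rw [show 4*k+2+4 = 4*k+6 from by ring, show 4*k+2+2 = 4*k+4 from by ring] at this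
      exact this
    have h8 : (Nat.fib (4*k+8) : ℤ) = 3 * Nat.fib (4*k+6) - Nat.fib (4*k+4) := by
      have := fib4 (4*k+4)
      rw [show 4*k+4+4 = 4*k+8 from by ring, show 4*k+4+2 = 4*k+6 from by ring] at this
      exact this
    have g1 : cseq (2*k+3) = ((Nat.fib (4*k+4) : ℤ), (Nat.fib (4*k+6) : ℤ)) := by
      show Bapp (cseq (2*k+2)) = _
      rw [ih2, h6]
      apply Prod.ext <;> simp [Bapp] <;> ring
    have g2 : cseq (2*k+4) = (-(Nat.fib (4*k+6) : ℤ), -(Nat.fib (4*k+8) : ℤ)) := by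
      show Bapp (cseq (2*k+3)) = _
      rw [g1, h8]
      apply Prod.ext <;> simp [Bapp] <;> ring
    constructor
    · rw [show 2*(k+1)+1 = 2*k+3 from by ring, show 4*(k+1)+2 = 4*k+6 from by ring,
        show 4*(k+1) = 4*k+4 from by ring]
      exact g1
    · rw [show 2*(k+1)+2 = 2*k+4 from by ring, show 4*(k+1)+2 = 4*k+6 from by ring,
        show 4*(k+1)+4 = 4*k+8 from by ring]
      exact g2

lemma fib_catalan (k : ℕ) :
    ((Nat.fib (k+1) : ℤ))^2 - Nat.fib (k+1) * Nat.fib k - (Nat.fib k : ℤ)^2 = (-1)^k := by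
  induction k with
  | zero => simp
  | succ k ih =>
    rw [show k+1+1 = k+2 from by ring, fibZ k, pow_succ]
    linear_combination -ih

def lin2 (α β γ δ : ℤ) : ℤ × ℤ →ₗ[ℤ] ℤ × ℤ where
  toFun z := (α*z.1 + β*z.2, γ*z.1 + δ*z.2)
  map_add' x y := by apply Prod.ext <;> simp <;> ring
  map_smul' c x := by apply Prod.ext <;> simp <;> ring

lemma lin2_apply (α β γ δ : ℤ) (z : ℤ × ℤ) :
    lin2 α β γ δ z = (α*z.1 + β*z.2, γ*z.1 + δ*z.2) := rfl

def piMap (n : ℕ) : (Fin n → ℤ) →ₗ[ℤ] ℤ × ℤ where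
  toFun v := ∑ t : Fin n, v t • cseq t.val
  map_add' x y := by simp [add_smul, Finset.sum_add_distrib]
  map_smul' c x := by
    simp only [Pi.smul_apply, smul_eq_mul, RingHom.id_apply, Finset.smul_sum, smul_smul]

lemma piMap_apply (n : ℕ) (v : Fin n → ℤ) : piMap n v = ∑ t : Fin n, v t • cseq t.val := rfl

lemma piMap_single (n : ℕ) (s : Fin n) (x : ℤ) :
    piMap n (Pi.single s x) = x • cseq s.val := by
  rw [piMap_apply, Finset.sum_eq_single s]
  · simp
  · intro b _ hb
    simp [Pi.single_apply, hb]
  · simp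

def psiMap (n : ℕ) (h : 3 ≤ n) : ℤ × ℤ →ₗ[ℤ] (Fin n → ℤ) where
  toFun z := z.1 • Pi.single (⟨0, by omega⟩ : Fin n) 1 + z.2 • Pi.single (⟨1, by omega⟩ : Fin n) 1
  map_add' x y := by
    funext i
    simp only [Prod.fst_add, Prod.snd_add, Pi.add_apply, Pi.smul_apply, smul_eq_mul]
    ring
  map_smul' c x := by
    funext i
    simp only [Prod.smul_fst, Prod.smul_snd, smul_eq_mul, Pi.add_apply, Pi.smul_apply,
      RingHom.id_apply]
    ring

lemma psiMap_apply (n : ℕ) (h : 3 ≤ n) (z : ℤ × ℤ) :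
    psiMap n h z
      = z.1 • Pi.single (⟨0, by omega⟩ : Fin n) 1 + z.2 • Pi.single (⟨1, by omega⟩ : Fin n) 1 :=
  rfl

def rhoMap (k l : ℕ) : ℤ × ℤ →ₗ[ℤ] ZMod k × ZMod l where
  toFun z := ((z.1 : ZMod k), (z.2 : ZMod l))
  map_add' x y := by apply Prod.ext <;> simp
  map_smul' c x := by apply Prod.ext <;> simp [zsmul_eq_mul]

lemma rhoMap_apply (k l : ℕ) (z : ℤ × ℤ) :
    rhoMap k l z = ((z.1 : ZMod k), (z.2 : ZMod l)) := rfl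

lemma mod_succ (i n : ℕ) (h : i < n) : (i+1) % n = if i+1 = n then 0 else i+1 := by
  split
  · simp [*]
  · exact Nat.mod_eq_of_lt (by omega)

lemma single_mul {n : ℕ} (j : Fin n) (c : ℤ) :
    (Pi.single j c : Fin n → ℤ) = c • (Pi.single j 1 : Fin n → ℤ) := by
  funext t
  simp only [Pi.smul_apply, Pi.single_apply, smul_eq_mul]
  split <;> simp

section cols
variable (n : ℕ) (h3 : 3 ≤ n) (A : Matrix (Fin n) (Fin n) ℤ)
  (hA : ∀ i j : Fin n, A i j =
      if i = j then 3
      else if ((i : ℕ) + 1) % n = (j : ℕ) ∨ ((j : ℕ) + 1) % n = (i : ℕ) then 1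
      else 0)

include h3 hA in
lemma col_mid (k : ℕ) (hk : k + 2 < n) :
    (fun i => A i ⟨k+1, by omega⟩) =
      Pi.single (⟨k, by omega⟩ : Fin n) 1 + Pi.single (⟨k+1, by omega⟩ : Fin n) 3
        + Pi.single (⟨k+2, hk⟩ : Fin n) 1 := by
  funext i
  have hi := i.isLt
  have hc1 : (((i:ℕ)+1) % n = k+1 ∨ ((k+1)+1) % n = (i:ℕ)) ↔ ((i:ℕ) = k ∨ (i:ℕ) = k+2) := by
    rw [mod_succ _ _ hi, mod_succ _ _ (by omega : k+1 < n)]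
    split_ifs <;>
        (try simp only [false_or, or_false, true_or, or_true, iff_true, true_iff, iff_false,
          false_iff, eq_self_iff_true, not_or]) <;>
      omega
  simp only [hA, Pi.add_apply, Pi.single_apply, Fin.ext_iff]
  simp only [hc1]
  split_ifs <;> omega

include h3 hA in
lemma col_zero (k : ℕ) (hk : k + 2 = n) :
    (fun i => A i ⟨0, by omega⟩) =
      Pi.single (⟨0, by omega⟩ : Fin n) 3 + Pi.single (⟨1, by omega⟩ : Fin n) 1
        + Pi.single (⟨k+1, by omega⟩ : Fin n) 1 := by
  funext i
  have hi := i.isLt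
  have hc1 : (((i:ℕ)+1) % n = 0 ∨ (0+1) % n = (i:ℕ)) ↔ ((i:ℕ) = k+1 ∨ (i:ℕ) = 1) := by
    rw [mod_succ _ _ hi, mod_succ _ _ (by omega : 0 < n)]
    split_ifs <;>
        (try simp only [false_or, or_false, true_or, or_true, iff_true, true_iff, iff_false,
          false_iff, eq_self_iff_true, not_or]) <;>
      omega
  simp only [hA, Pi.add_apply, Pi.single_apply, Fin.ext_iff]
  simp only [hc1]
  split_ifs <;> omega

include h3 hA in
lemma col_last (k : ℕ) (hk : k + 2 = n) :
    (fun i => A i ⟨k+1, by omega⟩) =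
      Pi.single (⟨k, by omega⟩ : Fin n) 1 + Pi.single (⟨k+1, by omega⟩ : Fin n) 3
        + Pi.single (⟨0, by omega⟩ : Fin n) 1 := by
  funext i
  have hi := i.isLt
  have hc1 : (((i:ℕ)+1) % n = k+1 ∨ ((k+1)+1) % n = (i:ℕ)) ↔ ((i:ℕ) = k ∨ (i:ℕ) = 0) := by
    rw [mod_succ _ _ hi, mod_succ _ _ (by omega : k+1 < n)]
    split_ifs <;>
        (try simp only [false_or, or_false, true_or, or_true, iff_true, true_iff, iff_false,
          false_iff, eq_self_iff_true, not_or]) <;>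
      omega
  simp only [hA, Pi.add_apply, Pi.single_apply, Fin.ext_iff]
  simp only [hc1]
  split_ifs <;> omega

lemma toLin'_eq_sum (w : Fin n → ℤ) :
    Matrix.toLin' A w = ∑ t : Fin n, w t • (fun i => A i t) := by
  funext i
  simp [Matrix.toLin'_apply, Matrix.mulVec, dotProduct, Finset.sum_apply, mul_comm]

lemma col_mem (t : Fin n) : (fun i => A i t) ∈ LinearMap.range (Matrix.toLin' A) := by
  refine ⟨Pi.single t 1, ?_⟩
  rw [toLin'_eq_sum n A, Finset.sum_eq_single t]
  · simp
  · intro b _ hb; simp [Pi.single_apply, hb]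
  · simp

end cols
end Stmt9Aux

open Stmt9Aux in
set_option maxHeartbeats 2000000 in
private theorem stmt9_aux (n : ℕ) (hodd : n % 2 = 1) (h3 : 3 ≤ n)
    (A : Matrix (Fin n) (Fin n) ℤ)
    (hA : ∀ i j : Fin n, A i j =
      if i = j then 3
      else if ((i : ℕ) + 1) % n = (j : ℕ) ∨ ((j : ℕ) + 1) % n = (i : ℕ) then 1
      else 0) :
    Nonempty (((Fin n → ℤ) ⧸ LinearMap.range (Matrix.toLin' A)) ≃+
      (ZMod (Nat.fib n) × ZMod (5 * Nat.fib n))) := by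
  obtain ⟨i, rfl⟩ : ∃ i, n = 2*i+3 := ⟨(n-3)/2, by omega⟩
  clear hodd h3
  set a : ℤ := (Nat.fib (2*i+3) : ℤ) with ha
  set b : ℤ := (Nat.fib (2*i+4) : ℤ) with hb
  -- Catalan identity
  have hcat : b^2 - a*b - a^2 = -1 := by
    have h := fib_catalan (2*i+3)
    rw [show 2*i+3+1 = 2*i+4 from by ring] at h
    rw [show ((-1:ℤ))^(2*i+3) = -1 from by
      rw [show 2*i+3 = 2*(i+1)+1 from by ring, pow_succ, pow_mul]; norm_num] at h
    rw [← ha, ← hb] at h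
    linear_combination h
  -- small fib identities
  have e22 : (Nat.fib (2*i+2) : ℤ) = b - a := by
    have h := fibZ (2*i+2)
    rw [show 2*i+2+2 = 2*i+4 from by ring, show 2*i+2+1 = 2*i+3 from by ring,
      ← ha, ← hb] at h
    linarith
  have e21 : (Nat.fib (2*i+1) : ℤ) = 2*a - b := by
    have h := fibZ (2*i+1)
    rw [show 2*i+1+2 = 2*i+3 from by ring, show 2*i+1+1 = 2*i+2 from by ring, e22,
      ← ha] at h
    linarith
  have e25 : (Nat.fib (2*i+5) : ℤ) = a + b := by
    have h := fibZ (2*i+3)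
    rw [show 2*i+3+2 = 2*i+5 from by ring, show 2*i+3+1 = 2*i+4 from by ring,
      ← ha, ← hb] at h
    linarith
  have hf4 : (Nat.fib (4*i+4) : ℤ) = (b-a)*(3*a-b) := by
    have h := Nat.fib_add (2*i+2) (2*i+1)
    rw [show 2*i+2+(2*i+1)+1 = 4*i+4 from by ring, show 2*i+2+1 = 2*i+3 from by ring] at h
    have h' := congrArg (Nat.cast : ℕ → ℤ) h
    push_cast at h'
    rw [e22, e21, ← ha] at h'
    rw [h']; ring
  have hf6 : (Nat.fib (4*i+6) : ℤ) = a*(2*b-a) := by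
    have h := Nat.fib_add (2*i+2) (2*i+3)
    rw [show 2*i+2+(2*i+3)+1 = 4*i+6 from by ring, show 2*i+2+1 = 2*i+3 from by ring,
      show 2*i+3+1 = 2*i+4 from by ring] at h
    have h' := congrArg (Nat.cast : ℕ → ℤ) h
    push_cast at h'
    rw [e22, ← ha, ← hb] at h'
    rw [h']; ring
  have hf8 : (Nat.fib (4*i+8) : ℤ) = b*(2*a+b) := by
    have h := Nat.fib_add (2*i+3) (2*i+4)
    rw [show 2*i+3+(2*i+4)+1 = 4*i+8 from by ring, show 2*i+3+1 = 2*i+4 from by ring,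
      show 2*i+4+1 = 2*i+5 from by ring] at h
    have h' := congrArg (Nat.cast : ℕ → ℤ) h
    push_cast at h'
    rw [e25, ← ha, ← hb] at h'
    rw [h']; ring
  -- values of the beta powers
  have hcn : cseq (2*i+3) = ((b-a)*(3*a-b), a*(2*b-a)) := by
    have h := (cseq_formula (i+1)).1
    rw [show 2*(i+1)+1 = 2*i+3 from by ring, show 4*(i+1)+2 = 4*i+6 from by ring,
      show 4*(i+1) = 4*i+4 from by ring, hf4, hf6] at h
    exact h
  have hcn1 : cseq (2*i+4) = (-(a*(2*b-a)), -(b*(2*a+b))) := by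
    have h := (cseq_formula (i+1)).2
    rw [show 2*(i+1)+2 = 2*i+4 from by ring, show 4*(i+1)+2 = 4*i+6 from by ring,
      show 4*(i+1)+4 = 4*i+8 from by ring, hf6, hf8] at h
    exact h
  -- the M vectors
  have hMv1 : cseq (2*i+3) - ((1:ℤ), (0:ℤ)) = (a*(3*b-4*a), a*(2*b-a)) := by
    rw [hcn, Prod.mk_sub_mk, Prod.mk.injEq]
    exact ⟨by linear_combination -hcat, by ring⟩
  have hMv2 : cseq (2*i+4) - ((0:ℤ), (1:ℤ)) = (a*(-(2*b-a)), a*(-(3*b+a))) := by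
    rw [hcn1, Prod.mk_sub_mk, Prod.mk.injEq]
    exact ⟨by ring, by linear_combination -hcat⟩
  set U1 : ℤ × ℤ →ₗ[ℤ] ℤ × ℤ := lin2 (-b) (b-a) (-(2*b-a)) (3*b-4*a) with hU1
  set F' : (Fin (2*i+3) → ℤ) →ₗ[ℤ] ZMod (Nat.fib (2*i+3)) × ZMod (5 * Nat.fib (2*i+3)) :=
    (rhoMap (Nat.fib (2*i+3)) (5 * Nat.fib (2*i+3))).comp (U1.comp (piMap (2*i+3))) with hF'
  have hF'app : ∀ v, F' v
      = rhoMap (Nat.fib (2*i+3)) (5 * Nat.fib (2*i+3)) (U1 (piMap (2*i+3) v)) := by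
    intro v; rw [hF']; rfl
  -- rho of U1 of anything in the image of M is zero
  have hRU : ∀ z : ℤ × ℤ,
      rhoMap (Nat.fib (2*i+3)) (5 * Nat.fib (2*i+3))
        (U1 (z.1 • (a*(3*b-4*a), a*(2*b-a)) + z.2 • (a*(-(2*b-a)), a*(-(3*b+a))))) = 0 := by
    intro z
    have hw : z.1 • ((a*(3*b-4*a), a*(2*b-a)) : ℤ × ℤ)
        + z.2 • ((a*(-(2*b-a)), a*(-(3*b+a))) : ℤ × ℤ)
        = (z.1*(a*(3*b-4*a)) + z.2*(a*(-(2*b-a))), z.1*(a*(2*b-a)) + z.2*(a*(-(3*b+a)))) := by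
      apply Prod.ext <;> simp
    rw [hw, hU1, lin2_apply, rhoMap_apply]
    apply Prod.ext <;> simp only [Prod.fst_zero, Prod.snd_zero]
    · rw [ZMod.intCast_zmod_eq_zero_iff_dvd]
      rw [← ha]
      exact ⟨z.1 + z.2 * ((b-a)*(-(3*b+a)) + b*(2*b-a)), by linear_combination (-(a*z.1))*hcat⟩
    · rw [ZMod.intCast_zmod_eq_zero_iff_dvd]
      push_cast
      rw [← ha]
      exact ⟨z.2, by linear_combination (-(5*a*z.2))*hcat⟩
  -- single values under F'
  have hFs : ∀ (s : Fin (2*i+3)) (x : ℤ),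
      F' (Pi.single s x)
        = rhoMap (Nat.fib (2*i+3)) (5 * Nat.fib (2*i+3)) (U1 (x • cseq (s:ℕ))) := by
    intro s x
    rw [hF'app, piMap_single]
  -- columns are in the kernel of F'
  have hcolker : ∀ t : Fin (2*i+3), F' (fun idx => A idx t) = 0 := by
    intro t
    obtain ⟨tv, htv⟩ := t
    rcases Nat.lt_or_ge 0 tv with h0 | h0
    swap
    · -- tv = 0
      have htv0 : tv = 0 := by omega
      subst htv0
      rw [col_zero (2*i+3) (by omega) A hA (2*i+1) (by omega)]
      rw [_root_.map_add, _root_.map_add, hFs, hFs, hFs]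
      rw [← _root_.map_add, ← _root_.map_add, ← _root_.map_add, ← _root_.map_add]
      have hX : (3:ℤ) • cseq ((⟨0, by omega⟩ : Fin (2*i+3)) : ℕ)
          + (1:ℤ) • cseq ((⟨1, by omega⟩ : Fin (2*i+3)) : ℕ)
          + (1:ℤ) • cseq ((⟨2*i+1+1, by omega⟩ : Fin (2*i+3)) : ℕ)
          = (-3:ℤ) • ((a*(3*b-4*a), a*(2*b-a)) : ℤ × ℤ)
            + (-1:ℤ) • ((a*(-(2*b-a)), a*(-(3*b+a))) : ℤ × ℤ) := by
      -- uses the recurrence at 2*i+2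
        have hr := cseq_rec (2*i+2)
        rw [show 2*i+2+2 = 2*i+4 from by ring, show 2*i+2+1 = 2*i+3 from by ring] at hr
        have hr1 := congrArg Prod.fst hr
        have hr2 := congrArg Prod.snd hr
        rw [hcn, hcn1] at hr1 hr2
        simp only [Prod.fst_sub, Prod.snd_sub, Prod.fst_neg, Prod.snd_neg,
          Prod.smul_fst, Prod.smul_snd, smul_eq_mul] at hr1 hr2
        have hv1 := congrArg Prod.fst hMv1
        have hv2 := congrArg Prod.snd hMv1
        have hw1 := congrArg Prod.fst hMv2
        have hw2 := congrArg Prod.snd hMv2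
        rw [hcn] at hv1 hv2
        rw [hcn1] at hw1 hw2
        simp only [Prod.fst_sub, Prod.snd_sub] at hv1 hv2 hw1 hw2
        show (3:ℤ) • cseq 0 + (1:ℤ) • cseq 1 + (1:ℤ) • cseq (2*i+2) = _
        rw [cseq_zero, cseq_one]
        apply Prod.ext <;>
          simp only [Prod.fst_add, Prod.snd_add, Prod.smul_fst, Prod.smul_snd, smul_eq_mul] <;>
          [linear_combination hr1 + 3*hcat; linear_combination hr2 + hcat]
      rw [hX]
      exact hRU (-3, -1)
    rcases Nat.lt_or_ge (tv + 1) (2*i+3) with hlast | hlast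
    · -- middle column
      obtain ⟨k, rfl⟩ : ∃ k, tv = k+1 := ⟨tv-1, by omega⟩
      rw [col_mid (2*i+3) (by omega) A hA k (by omega)]
      rw [_root_.map_add, _root_.map_add, hFs, hFs, hFs]
      rw [← _root_.map_add, ← _root_.map_add, ← _root_.map_add, ← _root_.map_add]
      have hX : (1:ℤ) • cseq ((⟨k, by omega⟩ : Fin (2*i+3)) : ℕ)
          + (3:ℤ) • cseq ((⟨k+1, by omega⟩ : Fin (2*i+3)) : ℕ)
          + (1:ℤ) • cseq ((⟨k+2, by omega⟩ : Fin (2*i+3)) : ℕ) = 0 := by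
        have hr := cseq_rec k
        have hr1 := congrArg Prod.fst hr
        have hr2 := congrArg Prod.snd hr
        simp only [Prod.fst_sub, Prod.snd_sub, Prod.fst_neg, Prod.snd_neg,
          Prod.smul_fst, Prod.smul_snd, smul_eq_mul] at hr1 hr2
        show (1:ℤ) • cseq k + (3:ℤ) • cseq (k+1) + (1:ℤ) • cseq (k+2) = 0
        apply Prod.ext <;>
          simp only [Prod.fst_add, Prod.snd_add, Prod.smul_fst, Prod.smul_snd, smul_eq_mul,
            Prod.fst_zero, Prod.snd_zero] <;>
          [linear_combination hr1; linear_combination hr2]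
      rw [hX, _root_.map_zero, _root_.map_zero]
    · -- last column
      obtain ⟨k, hk⟩ : ∃ k, tv = k+1 := ⟨tv-1, by omega⟩
      have hk2 : k + 2 = 2*i+3 := by omega
      have hk' : k = 2*i+1 := by omega
      subst hk
      subst hk'
      rw [col_last (2*i+3) (by omega) A hA (2*i+1) (by omega)]
      rw [_root_.map_add, _root_.map_add, hFs, hFs, hFs]
      rw [← _root_.map_add, ← _root_.map_add, ← _root_.map_add, ← _root_.map_add]
      have hX : (1:ℤ) • cseq ((⟨2*i+1, by omega⟩ : Fin (2*i+3)) : ℕ)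
          + (3:ℤ) • cseq ((⟨2*i+1+1, by omega⟩ : Fin (2*i+3)) : ℕ)
          + (1:ℤ) • cseq ((⟨0, by omega⟩ : Fin (2*i+3)) : ℕ)
          = (-1:ℤ) • ((a*(3*b-4*a), a*(2*b-a)) : ℤ × ℤ)
            + (0:ℤ) • ((a*(-(2*b-a)), a*(-(3*b+a))) : ℤ × ℤ) := by
        have hr := cseq_rec (2*i+1)
        rw [show 2*i+1+2 = 2*i+3 from by ring, show 2*i+1+1 = 2*i+2 from by ring] at hr
        have hr1 := congrArg Prod.fst hr
        have hr2 := congrArg Prod.snd hr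
        rw [hcn] at hr1 hr2
        simp only [Prod.fst_sub, Prod.snd_sub, Prod.fst_neg, Prod.snd_neg,
          Prod.smul_fst, Prod.smul_snd, smul_eq_mul] at hr1 hr2
        show (1:ℤ) • cseq (2*i+1) + (3:ℤ) • cseq (2*i+2) + (1:ℤ) • cseq 0 = _
        rw [cseq_zero]
        apply Prod.ext <;>
          simp only [Prod.fst_add, Prod.snd_add, Prod.smul_fst, Prod.smul_snd, smul_eq_mul] <;>
          [linear_combination hr1 + hcat; linear_combination hr2]
      rw [hX]
      exact hRU (-1, 0)
  -- range A ≤ ker F'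
  have hrange_ker : ∀ w, F' (Matrix.toLin' A w) = 0 := by
    intro w
    rw [toLin'_eq_sum _ A w, _root_.map_sum]
    simp only [_root_.map_smul, hcolker, smul_zero]
    exact Finset.sum_const_zero
  -- inverse of U1
  set U1inv : ℤ × ℤ →ₗ[ℤ] ℤ × ℤ := lin2 (3*b-4*a) (-(b-a)) (2*b-a) (-b) with hU1inv
  have hU1U : ∀ z : ℤ × ℤ, U1 (U1inv z) = z := by
    intro z
    rw [hU1, hU1inv, lin2_apply, lin2_apply]
    apply Prod.ext <;> simp only <;>
      [linear_combination (-z.1)*hcat; linear_combination (-z.2)*hcat]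
  have hUinvU : ∀ z : ℤ × ℤ, U1inv (U1 z) = z := by
    intro z
    rw [hU1, hU1inv, lin2_apply, lin2_apply]
    apply Prod.ext <;> simp only <;>
      [linear_combination (-z.1)*hcat; linear_combination (-z.2)*hcat]
  -- psi is a partial section of pi
  have hps : ∀ z : ℤ × ℤ, piMap (2*i+3) (psiMap (2*i+3) (by omega) z) = z := by
    intro z
    rw [psiMap_apply, _root_.map_add, _root_.map_smul, _root_.map_smul, piMap_single, piMap_single]
    show z.1 • cseq 0 + z.2 • cseq 1 = z
    rw [cseq_zero, cseq_one]
    apply Prod.ext <;> simp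
  -- surjectivity of F'
  have hsurj : Function.Surjective F' := by
    intro y
    obtain ⟨x1, hx1⟩ := ZMod.intCast_surjective (n := Nat.fib (2*i+3)) y.1
    obtain ⟨x2, hx2⟩ := ZMod.intCast_surjective (n := 5 * Nat.fib (2*i+3)) y.2
    refine ⟨psiMap (2*i+3) (by omega) (U1inv (x1, x2)), ?_⟩
    rw [hF'app, hps, hU1U, rhoMap_apply]
    apply Prod.ext <;> simp [hx1, hx2]
  -- the inductive lemma: basis vectors agree with psi of cseq modulo range A
  have hQ : ∀ k (hk : k < 2*i+3),
      (Pi.single (⟨k, hk⟩ : Fin (2*i+3)) 1 - psiMap (2*i+3) (by omega) (cseq k))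
        ∈ LinearMap.range (Matrix.toLin' A) := by
    intro k
    induction k using Nat.strong_induction_on with
    | _ k ih =>
      intro hk
      match k, ih with
      | 0, ih => ?_
      | 1, ih => ?_
      | (k+2), ih => ?_
      · have : Pi.single (⟨0, hk⟩ : Fin (2*i+3)) (1:ℤ)
            - psiMap (2*i+3) (by omega) (cseq 0) = 0 := by
          rw [cseq_zero, psiMap_apply]
          simp
        rw [this]
        exact Submodule.zero_mem _
      · have : Pi.single (⟨1, hk⟩ : Fin (2*i+3)) (1:ℤ)
            - psiMap (2*i+3) (by omega) (cseq 1) = 0 := by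
          rw [cseq_one, psiMap_apply]
          simp
        rw [this]
        exact Submodule.zero_mem _
      · have h0 := ih k (by omega) (by omega)
        have h1 := ih (k+1) (by omega) (by omega)
        have hcm := col_mid (2*i+3) (by omega) A hA k (by omega)
        have hcolm := col_mem (2*i+3) A (⟨k+1, by omega⟩ : Fin (2*i+3))
        have heq : Pi.single (⟨k+2, hk⟩ : Fin (2*i+3)) (1:ℤ)
            - psiMap (2*i+3) (by omega) (cseq (k+2))
            = (fun idx => A idx (⟨k+1, by omega⟩ : Fin (2*i+3)))
              - (Pi.single (⟨k, by omega⟩ : Fin (2*i+3)) 1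
                  - psiMap (2*i+3) (by omega) (cseq k))
              - (3:ℤ) • (Pi.single (⟨k+1, by omega⟩ : Fin (2*i+3)) 1
                  - psiMap (2*i+3) (by omega) (cseq (k+1))) := by
          rw [hcm, cseq_rec k, _root_.map_sub, _root_.map_neg, _root_.map_smul,
            single_mul (⟨k+1, by omega⟩ : Fin (2*i+3)) 3]
          module
        rw [heq]
        exact Submodule.sub_mem _ (Submodule.sub_mem _ hcolm h0) (Submodule.smul_mem _ _ h1)
  -- psi of the M vectors is in range A
  have hM1 : psiMap (2*i+3) (by omega) ((a*(3*b-4*a), a*(2*b-a)) : ℤ × ℤ)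
      ∈ LinearMap.range (Matrix.toLin' A) := by
    have hcl := col_last (2*i+3) (by omega) A hA (2*i+1) (by omega)
    have hclm := col_mem (2*i+3) A (⟨2*i+1+1, by omega⟩ : Fin (2*i+3))
    have heq : psiMap (2*i+3) (by omega) ((a*(3*b-4*a), a*(2*b-a)) : ℤ × ℤ)
        = (Pi.single (⟨2*i+1, by omega⟩ : Fin (2*i+3)) 1
            - psiMap (2*i+3) (by omega) (cseq (2*i+1)))
          + (3:ℤ) • (Pi.single (⟨2*i+1+1, by omega⟩ : Fin (2*i+3)) 1
            - psiMap (2*i+3) (by omega) (cseq (2*i+2)))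
          - (fun idx => A idx (⟨2*i+1+1, by omega⟩ : Fin (2*i+3))) := by
      rw [← hMv1, hcl, _root_.map_sub]
      have hr := cseq_rec (2*i+1)
      rw [show 2*i+1+2 = 2*i+3 from by ring, show 2*i+1+1 = 2*i+2 from by ring] at hr
      rw [hr, _root_.map_sub, _root_.map_neg, _root_.map_smul,
        single_mul (⟨2*i+1+1, by omega⟩ : Fin (2*i+3)) 3]
      have hpsi10 : psiMap (2*i+3) (by omega) (((1:ℤ), (0:ℤ)) : ℤ × ℤ)
          = Pi.single (⟨0, by omega⟩ : Fin (2*i+3)) 1 := by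
        rw [psiMap_apply]; simp
      rw [hpsi10]
      module
    rw [heq]
    exact Submodule.sub_mem _
      (Submodule.add_mem _ (hQ (2*i+1) (by omega)) (Submodule.smul_mem _ _ (by
        have := hQ (2*i+2) (by omega)
        convert this using 3))) hclm
  have hM2 : psiMap (2*i+3) (by omega) ((a*(-(2*b-a)), a*(-(3*b+a))) : ℤ × ℤ)
      ∈ LinearMap.range (Matrix.toLin' A) := by
    have hcz := col_zero (2*i+3) (by omega) A hA (2*i+1) (by omega)
    have hczm := col_mem (2*i+3) A (⟨0, by omega⟩ : Fin (2*i+3))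
    have heq : psiMap (2*i+3) (by omega) ((a*(-(2*b-a)), a*(-(3*b+a))) : ℤ × ℤ)
        = (Pi.single (⟨2*i+1+1, by omega⟩ : Fin (2*i+3)) 1
            - psiMap (2*i+3) (by omega) (cseq (2*i+2)))
          - (3:ℤ) • psiMap (2*i+3) (by omega) ((a*(3*b-4*a), a*(2*b-a)) : ℤ × ℤ)
          - (fun idx => A idx (⟨0, by omega⟩ : Fin (2*i+3))) := by
      rw [← hMv1, ← hMv2, hcz]
      have hr := cseq_rec (2*i+2)
      rw [show 2*i+2+2 = 2*i+4 from by ring, show 2*i+2+1 = 2*i+3 from by ring] at hr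
      rw [hr, _root_.map_sub, _root_.map_sub, _root_.map_sub, _root_.map_neg, _root_.map_smul,
        single_mul (⟨0, by omega⟩ : Fin (2*i+3)) 3]
      have hpsi10 : psiMap (2*i+3) (by omega) (((1:ℤ), (0:ℤ)) : ℤ × ℤ)
          = Pi.single (⟨0, by omega⟩ : Fin (2*i+3)) 1 := by
        rw [psiMap_apply]; simp
      have hpsi01 : psiMap (2*i+3) (by omega) (((0:ℤ), (1:ℤ)) : ℤ × ℤ)
          = Pi.single (⟨1, by omega⟩ : Fin (2*i+3)) 1 := by
        rw [psiMap_apply]; simp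
      rw [hpsi10, hpsi01]
      module
    rw [heq]
    exact Submodule.sub_mem _
      (Submodule.sub_mem _ (by
        have := hQ (2*i+2) (by omega)
        convert this using 3) (Submodule.smul_mem _ _ hM1)) hczm
  -- v - psi (pi v) is in range A
  have hkey : ∀ v : Fin (2*i+3) → ℤ,
      v - psiMap (2*i+3) (by omega) (piMap (2*i+3) v)
        ∈ LinearMap.range (Matrix.toLin' A) := by
    intro v
    have hveq : v - psiMap (2*i+3) (by omega) (piMap (2*i+3) v)
        = ∑ t : Fin (2*i+3),
            v t • (Pi.single t 1 - psiMap (2*i+3) (by omega) (cseq (t:ℕ))) := by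
      simp only [smul_sub]
      rw [Finset.sum_sub_distrib]
      congr 1
      · funext idx
        simp [Finset.sum_apply, Pi.single_apply, mul_comm]
      · rw [piMap_apply, _root_.map_sum]
        simp only [_root_.map_smul]
    rw [hveq]
    refine Submodule.sum_mem _ (fun t _ => Submodule.smul_mem _ _ ?_)
    have := hQ (t:ℕ) t.isLt
    simpa [Fin.eta] using this
  -- kernel of F' is contained in range A
  have hker_sub : ∀ v, F' v = 0 → v ∈ LinearMap.range (Matrix.toLin' A) := by
    intro v hv
    rw [hF'app, rhoMap_apply] at hv
    have hv1 := congrArg Prod.fst hv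
    have hv2 := congrArg Prod.snd hv
    simp only [Prod.fst_zero, Prod.snd_zero] at hv1 hv2
    rw [ZMod.intCast_zmod_eq_zero_iff_dvd] at hv1 hv2
    obtain ⟨k1, hk1⟩ := hv1
    obtain ⟨k2, hk2⟩ := hv2
    push_cast at hk2
    rw [← ha] at hk1 hk2
    -- pi v = U1inv (U1 (pi v)) and decompose
    have hdec : piMap (2*i+3) v
        = (k1 + ((-b)*(2*b-a) - (b-a)*(-(3*b+a)))*k2) • ((a*(3*b-4*a), a*(2*b-a)) : ℤ × ℤ)
          + k2 • ((a*(-(2*b-a)), a*(-(3*b+a))) : ℤ × ℤ) := by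
      have h := hUinvU (piMap (2*i+3) v)
      rw [← h, hU1inv, lin2_apply, hk1, hk2]
      apply Prod.ext <;>
        simp only [Prod.fst_add, Prod.snd_add, Prod.smul_fst, Prod.smul_snd, smul_eq_mul] <;>
        [linear_combination (-(a*k2*(3*b-4*a)))*hcat; linear_combination (-(a*k2*(2*b-a)))*hcat]
    have hveq : v = (v - psiMap (2*i+3) (by omega) (piMap (2*i+3) v))
        + ((k1 + ((-b)*(2*b-a) - (b-a)*(-(3*b+a)))*k2)
            • psiMap (2*i+3) (by omega) ((a*(3*b-4*a), a*(2*b-a)) : ℤ × ℤ)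
          + k2 • psiMap (2*i+3) (by omega) ((a*(-(2*b-a)), a*(-(3*b+a))) : ℤ × ℤ)) := by
      rw [← _root_.map_smul, ← _root_.map_smul, ← _root_.map_add, ← hdec]
      abel
    rw [hveq]
    exact Submodule.add_mem _ (hkey v)
      (Submodule.add_mem _ (Submodule.smul_mem _ _ hM1) (Submodule.smul_mem _ _ hM2))
  -- assemble
  have hker : LinearMap.ker F' = LinearMap.range (Matrix.toLin' A) := by
    apply le_antisymm
    · intro v hv
      exact hker_sub v (LinearMap.mem_ker.mp hv)
    · rintro v ⟨w, rfl⟩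
      exact LinearMap.mem_ker.mpr (hrange_ker w)
  exact ⟨((Submodule.quotEquivOfEq _ _ hker.symm).trans
    (F'.quotKerEquivOfSurjective hsurj)).toAddEquiv⟩

/-- Lemma `OddCycleUnbalanced`: for `n = 2m+1`, the cokernel of the reduced signed
Laplacian `A` of the all-negative odd wheel `-W_{2m+1}` (diagonal `3`, entry `1` at
cyclically adjacent positions, `0` otherwise) is `ℤ_{fib(2m+1)} ⊕ ℤ_{5·fib(2m+1)}`. -/
theorem stmt9 (m : ℕ) (hm : 1 ≤ m) (A : Matrix (Fin (2 * m + 1)) (Fin (2 * m + 1)) ℤ)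
    (hA : ∀ i j : Fin (2 * m + 1), A i j =
      if i = j then 3
      else if ((i : ℕ) + 1) % (2 * m + 1) = (j : ℕ) ∨
              ((j : ℕ) + 1) % (2 * m + 1) = (i : ℕ) then 1
      else 0) :
    Nonempty (((Fin (2 * m + 1) → ℤ) ⧸ LinearMap.range (Matrix.toLin' A)) ≃+
      (ZMod (Nat.fib (2 * m + 1)) × ZMod (5 * Nat.fib (2 * m + 1)))) :=
  stmt9_aux (2 * m + 1) (by omega) (by omega) A hA
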